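/- For any n×n complex matrix X, the centralizer group G^X = {g ∈ GL_n(ℂ) : gX = Xg} acts on ℂ^n with finitely many orbits. -/

import Mathlib

open Matrix

section Aux

open Polynomial DirectSum

/-- In `R ⧸ (p^e)` over a PID, every element is a unit times a power of `p`. -/
theorem quot_rep_aux {R : Type} [CommRing R] [IsDomain R] [IsPrincipalIdealRing R]
    {p : R} (hp : Irreducible p) (e : ℕ) (x : R ⧸ (Ideal.span {p ^ e})) :
    ∃ (c : R ⧸ (Ideal.span {p ^ e})) (a : ℕ), IsUnit c ∧ a ≤ e ∧
      x = c * Ideal.Quotient.mk _ (p ^ a) := by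
  obtain ⟨f, rfl⟩ := Ideal.Quotient.mk_surjective x
  by_cases hdvd : p ^ e ∣ f
  · refine ⟨1, e, isUnit_one, le_rfl, ?_⟩
    rw [one_mul, Ideal.Quotient.eq_zero_iff_mem.mpr (Ideal.mem_span_singleton.mpr hdvd),
      Ideal.Quotient.eq_zero_iff_mem.mpr (Ideal.mem_span_singleton.mpr dvd_rfl)]
  · have hf : f ≠ 0 := fun h => hdvd (h ▸ dvd_zero _)
    have hfin : FiniteMultiplicity p f :=
      FiniteMultiplicity.of_not_isUnit hp.not_isUnit hf
    obtain ⟨c, hc, hpc⟩ := hfin.exists_eq_pow_mul_and_not_dvd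
    have hle : multiplicity p f ≤ e := by
      by_contra h
      push_neg at h
      exact hdvd (dvd_trans (pow_dvd_pow p h.le) (pow_multiplicity_dvd p f))
    obtain ⟨u, v, huv⟩ := hp.coprime_pow_of_not_dvd e hpc
    refine ⟨Ideal.Quotient.mk _ c, multiplicity p f, ?_, hle, ?_⟩
    · refine IsUnit.of_mul_eq_one (Ideal.Quotient.mk _ u) ?_
      have : Ideal.Quotient.mk (Ideal.span {p^e}) (u * c + v * (p^e)) = 1 := by rw [huv]; simp
      simpa [Ideal.Quotient.eq_zero_iff_mem, Ideal.mem_span_singleton, mul_comm] using this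
    · conv_lhs => rw [hc]
      rw [_root_.map_mul, mul_comm]

/-- Multiplication by a unit of an `R`-algebra, as an `R`-linear equivalence. -/
noncomputable def mulUnitEquiv {R A : Type*} [CommSemiring R] [CommSemiring A] [Algebra R A]
    (u : Aˣ) : A ≃ₗ[R] A :=
  LinearEquiv.ofLinear (LinearMap.mulLeft R (u : A)) (LinearMap.mulLeft R ((u⁻¹ : Aˣ) : A))
    (by ext x; simp [← mul_assoc]) (by ext x; simp [← mul_assoc])

@[simp] lemma mulUnitEquiv_apply {R A : Type*} [CommSemiring R] [CommSemiring A] [Algebra R A]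
    (u : Aˣ) (x : A) : mulUnitEquiv (R := R) u x = (u : A) * x := rfl

lemma diag_unit_eq {R : Type} [CommRing R] {ι : Type} [Fintype ι] [DecidableEq ι]
    (I : ι → Ideal R) (u : Π i, (R ⧸ I i)ˣ) (y : Π i, R) (x : ⨁ i, R ⧸ I i)
    (hx : ∀ i, x i = (u i : R ⧸ I i) * Ideal.Quotient.mk (I i) (y i)) :
    (DFinsupp.mapRange.linearEquiv (fun i => mulUnitEquiv (R := R) (u i)))
      (DFinsupp.equivFunOnFintype.symm (fun i => Ideal.Quotient.mk (I i) (y i))) = x := by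
  ext i
  rw [DFinsupp.mapRange.linearEquiv_apply, DFinsupp.mapRange_apply, hx i]
  congr 1

/-- A linear automorphism of `Fin n → ℂ`, as an element of `GL (Fin n) ℂ`. -/
noncomputable def glOfEquiv (n : ℕ) (G' : (Fin n → ℂ) ≃ₗ[ℂ] (Fin n → ℂ)) : GL (Fin n) ℂ where
  val := LinearMap.toMatrix' G'.toLinearMap
  inv := LinearMap.toMatrix' G'.symm.toLinearMap
  val_inv := by rw [← LinearMap.toMatrix'_comp]; simp
  inv_val := by rw [← LinearMap.toMatrix'_comp]; simp

lemma glOfEquiv_mulVec (n : ℕ) (G' : (Fin n → ℂ) ≃ₗ[ℂ] (Fin n → ℂ)) (v : Fin n → ℂ) :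
    (↑(glOfEquiv n G') : Matrix (Fin n) (Fin n) ℂ) *ᵥ v = G' v := by
  show (LinearMap.toMatrix' G'.toLinearMap) *ᵥ v = G' v
  rw [← Matrix.toLin'_apply, Matrix.toLin'_toMatrix']
  rfl

lemma glOfEquiv_comm (n : ℕ) (X : Matrix (Fin n) (Fin n) ℂ)
    (G' : (Fin n → ℂ) ≃ₗ[ℂ] (Fin n → ℂ))
    (h : ∀ v, G' (X *ᵥ v) = X *ᵥ (G' v)) :
    (↑(glOfEquiv n G') : Matrix (Fin n) (Fin n) ℂ) * X
      = X * (↑(glOfEquiv n G') : Matrix (Fin n) (Fin n) ℂ) := by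
  apply Matrix.toLin'.injective
  ext v
  simp only [Matrix.toLin'_mul, LinearMap.comp_apply, Matrix.toLin'_apply]
  rw [glOfEquiv_mulVec, glOfEquiv_mulVec, h]

lemma inv_comm_of_comm {M : Type*} [Ring M] {a b x : M} (hab : a * b = 1) (hba : b * a = 1)
    (h : a * x = x * a) : b * x = x * b := by
  calc b * x = b * (x * a) * b := by
        rw [mul_assoc b (x * a) b, mul_assoc x a b, hab, mul_one]
    _ = b * (a * x) * b := by rw [h]
    _ = x * b := by rw [← mul_assoc b a x, hba, one_mul]

lemma comm_inv {n : ℕ} {X : Matrix (Fin n) (Fin n) ℂ} {g : GL (Fin n) ℂ}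
    (h : (↑g : Matrix (Fin n) (Fin n) ℂ) * X = X * (↑g : Matrix (Fin n) (Fin n) ℂ)) :
    (↑g⁻¹ : Matrix (Fin n) (Fin n) ℂ) * X = X * (↑g⁻¹ : Matrix (Fin n) (Fin n) ℂ) :=
  inv_comm_of_comm (g.mul_inv) (g.inv_mul) h

/-- The orbit relation: if `w` is in the orbit of `v`, the orbits agree. -/
lemma orbit_eq_of_mem {n : ℕ} {X : Matrix (Fin n) (Fin n) ℂ} {v w : Fin n → ℂ}
    (hw : ∃ g : GL (Fin n) ℂ,
        (↑g : Matrix (Fin n) (Fin n) ℂ) * X = X * (↑g : Matrix (Fin n) (Fin n) ℂ) ∧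
        (↑g : Matrix (Fin n) (Fin n) ℂ) *ᵥ v = w) :
    {z | ∃ g : GL (Fin n) ℂ,
        (↑g : Matrix (Fin n) (Fin n) ℂ) * X = X * (↑g : Matrix (Fin n) (Fin n) ℂ) ∧
        (↑g : Matrix (Fin n) (Fin n) ℂ) *ᵥ w = z}
      = {z | ∃ g : GL (Fin n) ℂ,
        (↑g : Matrix (Fin n) (Fin n) ℂ) * X = X * (↑g : Matrix (Fin n) (Fin n) ℂ) ∧
        (↑g : Matrix (Fin n) (Fin n) ℂ) *ᵥ v = z} := by
  obtain ⟨g, hgc, hgv⟩ := hw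
  ext z
  constructor
  · rintro ⟨h, hhc, rfl⟩
    refine ⟨h * g, ?_, ?_⟩
    · rw [Units.val_mul, mul_assoc, hgc, ← mul_assoc, hhc, mul_assoc]
    · rw [Units.val_mul, ← Matrix.mulVec_mulVec, hgv]
  · rintro ⟨h, hhc, rfl⟩
    refine ⟨h * g⁻¹, ?_, ?_⟩
    · rw [Units.val_mul, mul_assoc, comm_inv hgc, ← mul_assoc, hhc, mul_assoc]
    · rw [Units.val_mul, ← hgv, Matrix.mulVec_mulVec, mul_assoc,
        show ((↑g⁻¹ : Matrix (Fin n) (Fin n) ℂ) * ↑g) = 1 from g.inv_mul, mul_one]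

end Aux

/-- For any `n×n` complex matrix `X`, the centralizer group
`G^X = {g ∈ GL_n(ℂ) : gX = Xg}` acts on `ℂ^n` with finitely many orbits. -/
theorem stmt3 (n : ℕ) (X : Matrix (Fin n) (Fin n) ℂ) :
    {O : Set (Fin n → ℂ) | ∃ v : Fin n → ℂ,
      O = {w | ∃ g : GL (Fin n) ℂ,
        (↑g : Matrix (Fin n) (Fin n) ℂ) * X = X * (↑g : Matrix (Fin n) (Fin n) ℂ) ∧
        (↑g : Matrix (Fin n) (Fin n) ℂ) *ᵥ v = w}}.Finite := by
  classical
  open Polynomial DirectSum in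
  -- the ℂ[X]-module structure on ℂ^n
  let φ : (Fin n → ℂ) →ₗ[ℂ] (Fin n → ℂ) := Matrix.toLinAlgEquiv' X
  have htors : Module.IsTorsion ℂ[X] (Module.AEval' φ) := by
    intro m
    refine ⟨⟨X.charpoly, mem_nonZeroDivisors_of_ne_zero X.charpoly_monic.ne_zero⟩, ?_⟩
    have h0 : Polynomial.aeval φ X.charpoly = 0 := by
      have := Polynomial.aeval_algHom_apply
        (Matrix.toLinAlgEquiv' (R := ℂ) (n := Fin n)).toAlgHom X X.charpoly
      simp only [AlgEquiv.coe_toAlgHom] at this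
      show Polynomial.aeval (Matrix.toLinAlgEquiv' X) X.charpoly = 0
      rw [this, Matrix.aeval_self_charpoly]
      simp
    have := Module.AEval.of_aeval_smul φ X.charpoly ((Module.AEval'.of φ).symm m)
    rw [h0] at this
    simpa using this.symm
  obtain ⟨ι, hfin, p, hp, e, ⟨F⟩⟩ := Module.equiv_directSum_of_isTorsion htors
  -- representatives
  let rep : (Π i, Fin (e i + 1)) → (Fin n → ℂ) := fun a =>
    (Module.AEval'.of φ).symm (F.symm (DFinsupp.equivFunOnFintype.symm
      (fun i => Ideal.Quotient.mk _ (p i ^ (a i : ℕ)))))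
  -- every vector is in the orbit of some representative
  have key : ∀ v : Fin n → ℂ, ∃ a : Π i, Fin (e i + 1), ∃ g : GL (Fin n) ℂ,
      (↑g : Matrix (Fin n) (Fin n) ℂ) * X = X * (↑g : Matrix (Fin n) (Fin n) ℂ) ∧
      (↑g : Matrix (Fin n) (Fin n) ℂ) *ᵥ rep a = v := by
    intro v
    set x := F (Module.AEval'.of φ v) with hxdef
    have H : ∀ i, ∃ (c : ℂ[X] ⧸ (Ideal.span {p i ^ e i})) (a : ℕ), IsUnit c ∧ a ≤ e i ∧
        x i = c * Ideal.Quotient.mk _ (p i ^ a) := fun i => quot_rep_aux (hp i) (e i) (x i)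
    choose c a hc ha hx using H
    let u : Π i, (ℂ[X] ⧸ (ℂ[X] ∙ p i ^ e i))ˣ := fun i => (hc i).unit
    let aa : Π i, Fin (e i + 1) := fun i => ⟨a i, Nat.lt_succ_of_le (ha i)⟩
    -- the diagonal automorphism by units
    let ψ : (⨁ i, ℂ[X] ⧸ (ℂ[X] ∙ p i ^ e i)) ≃ₗ[ℂ[X]] ⨁ i, ℂ[X] ⧸ (ℂ[X] ∙ p i ^ e i) :=
      DFinsupp.mapRange.linearEquiv (fun i => mulUnitEquiv (R := ℂ[X]) (u i))
    have hψ : ψ (DFinsupp.equivFunOnFintype.symm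
        (fun i => Ideal.Quotient.mk _ (p i ^ (a i : ℕ)))) = x := by
      refine diag_unit_eq (fun i => (ℂ[X] ∙ p i ^ e i : Ideal ℂ[X])) u (fun i => p i ^ a i) x
        (fun i => ?_)
      rw [IsUnit.unit_spec]
      exact hx i
    -- the ℂ[X]-linear automorphism of ℂ^n
    let G : Module.AEval' φ ≃ₗ[ℂ[X]] Module.AEval' φ := F.trans (ψ.trans F.symm)
    let G' : (Fin n → ℂ) ≃ₗ[ℂ] (Fin n → ℂ) :=
      ((Module.AEval'.of φ).trans (G.restrictScalars ℂ)).trans (Module.AEval'.of φ).symm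
    have hG' : ∀ m, G' (X *ᵥ m) = X *ᵥ (G' m) := by
      intro m
      show (Module.AEval'.of φ).symm (G (Module.AEval'.of φ (φ m)))
        = φ ((Module.AEval'.of φ).symm (G (Module.AEval'.of φ m)))
      rw [← Module.AEval'.X_smul_of, _root_.map_smul, Module.AEval'.of_symm_X_smul]
    refine ⟨aa, glOfEquiv n G', glOfEquiv_comm n X G' hG', ?_⟩
    rw [glOfEquiv_mulVec]
    show (Module.AEval'.of φ).symm (G (Module.AEval'.of φ (rep aa))) = v
    have : Module.AEval'.of φ (rep aa) = F.symm (DFinsupp.equivFunOnFintype.symm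
        (fun i => Ideal.Quotient.mk _ (p i ^ (aa i : ℕ)))) := by
      simp [rep]
    rw [this]
    show (Module.AEval'.of φ).symm (F.symm (ψ (F (F.symm _)))) = v
    rw [F.apply_symm_apply, hψ, hxdef, F.symm_apply_apply]
    simp
  -- conclude
  apply Set.Finite.subset (Set.Finite.image
    (fun s : Fin n → ℂ => {w | ∃ g : GL (Fin n) ℂ,
        (↑g : Matrix (Fin n) (Fin n) ℂ) * X = X * (↑g : Matrix (Fin n) (Fin n) ℂ) ∧
        (↑g : Matrix (Fin n) (Fin n) ℂ) *ᵥ s = w}) (Set.finite_range rep))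
  rintro O ⟨v, rfl⟩
  obtain ⟨aa, g, hgc, hgv⟩ := key v
  exact ⟨rep aa, Set.mem_range_self aa, (orbit_eq_of_mem ⟨g, hgc, hgv⟩).symm⟩
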